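/- arXiv:2512.02767 — 2 statements merged into one kernel-verified Lean document; each statement's English description precedes it below -/
import Mathlib

section
/- Suppose X, Y, A, B, W are jointly distributed finitely-valued random variables such that H(W|X,Y) = 0, I(X,Y : A | W) ≤ δ, and max{H(W|X), H(W|Y)} ≤ δ for some δ ≥ 0. Then I(X:Y) ≤ I(X:Y|A) + I(X:Y|B) + I(A:B) + C·δ for some absolute constant C (one may take C = 6). -/
open scoped BigOperators

namespace PaperIngleton

open Classical in
/-- Probability of an event under a pmf `p` on a finite sample space. -/
noncomputable def prob {Ω : Type*} [Fintype Ω] (p : Ω → ℝ) (E : Ω → Prop) : ℝ :=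
  ∑ ω, if E ω then p ω else 0

/-- Shannon entropy of a finitely-valued random variable `X` under pmf `p`. -/
noncomputable def ent {Ω S : Type*} [Fintype Ω] [Fintype S] (p : Ω → ℝ) (X : Ω → S) : ℝ :=
  -∑ s : S, prob p (fun ω => X ω = s) * Real.log (prob p (fun ω => X ω = s))

/-- Conditional entropy `H(X|Y)`. -/
noncomputable def condEnt {Ω S T : Type*} [Fintype Ω] [Fintype S] [Fintype T]
    (p : Ω → ℝ) (X : Ω → S) (Y : Ω → T) : ℝ :=
  ent p (fun ω => (X ω, Y ω)) - ent p Y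

/-- Mutual information `I(X:Y)`. -/
noncomputable def mi {Ω S T : Type*} [Fintype Ω] [Fintype S] [Fintype T]
    (p : Ω → ℝ) (X : Ω → S) (Y : Ω → T) : ℝ :=
  ent p X + ent p Y - ent p (fun ω => (X ω, Y ω))

/-- Conditional mutual information `I(X:Y|Z)`. -/
noncomputable def cmi {Ω S T U : Type*} [Fintype Ω] [Fintype S] [Fintype T] [Fintype U]
    (p : Ω → ℝ) (X : Ω → S) (Y : Ω → T) (Z : Ω → U) : ℝ :=
  ent p (fun ω => (X ω, Z ω)) + ent p (fun ω => (Y ω, Z ω))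
    - ent p (fun ω => (X ω, Y ω, Z ω)) - ent p Z

end PaperIngleton

namespace PaperIngleton

section Lemmas

variable {Ω S T U V R : Type*} [Fintype Ω] [Fintype S] [Fintype T] [Fintype U]
  [Fintype V] [Fintype R]

lemma prob_nonneg (p : Ω → ℝ) (hp : ∀ ω, 0 ≤ p ω) (E : Ω → Prop) : 0 ≤ prob p E := by
  simp only [prob]
  refine Finset.sum_nonneg fun ω _ => ?_
  split_ifs
  · exact hp ω
  · exact le_refl 0

lemma sum_prob (p : Ω → ℝ) (hp1 : ∑ ω, p ω = 1) (X : Ω → S) :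
    ∑ s : S, prob p (fun ω => X ω = s) = 1 := by
  simp only [prob]
  rw [Finset.sum_comm, ← hp1]
  refine Finset.sum_congr rfl fun ω _ => ?_
  refine (Finset.sum_eq_single_of_mem (X ω) (Finset.mem_univ _)
    (fun s _ hs => if_neg (fun hh => hs hh.symm))).trans (if_pos rfl)

lemma prob_snd (p : Ω → ℝ) (F : Ω → S) (G : Ω → V) (v : V) :
    prob p (fun ω => G ω = v) = ∑ s : S, prob p (fun ω => (F ω, G ω) = (s, v)) := by
  simp only [prob]
  rw [Finset.sum_comm]
  refine Finset.sum_congr rfl fun ω _ => ?_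
  symm
  rcases eq_or_ne (G ω) v with h | h
  · rw [if_pos h]
    refine (Finset.sum_eq_single_of_mem (F ω) (Finset.mem_univ _)
      (fun s _ hs => if_neg (fun hh => hs ((congrArg Prod.fst hh : F ω = s)).symm))).trans
      (if_pos (by rw [h]))
  · rw [if_neg h]
    refine Finset.sum_eq_zero fun s _ => if_neg fun hh => h (congrArg Prod.snd hh : G ω = v)

lemma prob_middle (p : Ω → ℝ) (F : Ω → S) (G : Ω → T) (H : Ω → U) (s : S) (u : U) :
    prob p (fun ω => (F ω, H ω) = (s, u))
      = ∑ t : T, prob p (fun ω => (F ω, G ω, H ω) = (s, t, u)) := by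
  simp only [prob]
  rw [Finset.sum_comm]
  refine Finset.sum_congr rfl fun ω _ => ?_
  symm
  rcases eq_or_ne ((F ω, H ω)) ((s, u)) with h | h
  · rw [if_pos h]
    have h1 : F ω = s := congrArg Prod.fst h
    have h2 : H ω = u := congrArg Prod.snd h
    refine (Finset.sum_eq_single_of_mem (G ω) (Finset.mem_univ _)
      (fun t _ ht => if_neg (fun hh =>
        ht ((congrArg (fun q : S × T × U => q.2.1) hh : G ω = t)).symm))).trans
      (if_pos (by rw [h1, h2]))
  · rw [if_neg h]
    refine Finset.sum_eq_zero fun t _ => if_neg fun hh => ?_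
    have h1 : F ω = s := congrArg Prod.fst hh
    have h2 : H ω = u := congrArg (fun q : S × T × U => q.2.2) hh
    exact h (by rw [h1, h2])

lemma ent_comp_inj (p : Ω → ℝ) (X : Ω → S) (f : S → T) (hf : Function.Injective f) :
    ent p (fun ω => f (X ω)) = ent p X := by
  classical
  unfold ent
  congr 1
  calc ∑ t : T, prob p (fun ω => f (X ω) = t) * Real.log (prob p (fun ω => f (X ω) = t))
      = ∑ t ∈ Finset.univ.image f,
          prob p (fun ω => f (X ω) = t) * Real.log (prob p (fun ω => f (X ω) = t)) := by
        symm
        apply Finset.sum_subset (Finset.subset_univ _)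
        intro t _ ht
        have h0 : prob p (fun ω => f (X ω) = t) = 0 := by
          simp only [prob]
          refine Finset.sum_eq_zero fun ω _ => if_neg fun hh => ?_
          exact ht (Finset.mem_image.2 ⟨X ω, Finset.mem_univ _, hh⟩)
        rw [h0]; simp
    _ = ∑ s : S, prob p (fun ω => f (X ω) = f s) * Real.log (prob p (fun ω => f (X ω) = f s)) := by
        apply Finset.sum_image
        intro x _ y _ h
        exact hf h
    _ = ∑ s : S, prob p (fun ω => X ω = s) * Real.log (prob p (fun ω => X ω = s)) := by
        refine Finset.sum_congr rfl fun s _ => ?_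
        have : prob p (fun ω => f (X ω) = f s) = prob p (fun ω => X ω = s) := by
          simp only [prob]
          exact Finset.sum_congr rfl fun ω _ => if_congr hf.eq_iff rfl rfl
        rw [this]

lemma ptwise {r a b c : ℝ} (hr : 0 ≤ r) (ha : r ≤ a) (hb : r ≤ b) (hc : r ≤ c) :
    r * Real.log a + r * Real.log b - r * Real.log r - r * Real.log c
      ≤ (if 0 < c then a * b / c else 0) - r := by
  classical
  rcases hr.eq_or_lt with h0 | h0
  · rw [← h0]
    simp only [zero_mul, sub_zero, add_zero, zero_add, sub_self]
    have ha0 : (0:ℝ) ≤ a := by linarith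
    have hb0 : (0:ℝ) ≤ b := by linarith
    split_ifs with h
    · have : (0:ℝ) ≤ a * b / c := div_nonneg (mul_nonneg ha0 hb0) h.le
      linarith
    · linarith
  · have hc' : 0 < c := lt_of_lt_of_le h0 hc
    have ha' : 0 < a := lt_of_lt_of_le h0 ha
    have hb' : 0 < b := lt_of_lt_of_le h0 hb
    rw [if_pos hc']
    have hx : (0:ℝ) < a * b / (r * c) := by positivity
    have hlog := Real.log_le_sub_one_of_pos hx
    have hexp : Real.log (a * b / (r * c)) = Real.log a + Real.log b - Real.log r - Real.log c := by
      rw [Real.log_div (by positivity) (by positivity), Real.log_mul ha'.ne' hb'.ne',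
        Real.log_mul h0.ne' hc'.ne']
      ring
    have h2 : r * Real.log (a * b / (r * c)) ≤ r * (a * b / (r * c) - 1) :=
      mul_le_mul_of_nonneg_left hlog h0.le
    have h3 : r * (a * b / (r * c) - 1) = a * b / c - r := by
      field_simp
    have h4 : r * Real.log a + r * Real.log b - r * Real.log r - r * Real.log c
        = r * Real.log (a * b / (r * c)) := by rw [hexp]; ring
    rw [h4]
    linarith

lemma key_ineq (r : S → T → U → ℝ) (hr : ∀ s t u, 0 ≤ r s t u)
    (hrsum : ∑ s, ∑ t, ∑ u, r s t u = 1)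
    (A : S → U → ℝ) (hA : ∀ s u, A s u = ∑ t, r s t u)
    (B : T → U → ℝ) (hB : ∀ t u, B t u = ∑ s, r s t u)
    (C : U → ℝ) (hC : ∀ u, C u = ∑ s, ∑ t, r s t u) :
    ∑ s, ∑ u, A s u * Real.log (A s u) + ∑ t, ∑ u, B t u * Real.log (B t u)
      ≤ ∑ s, ∑ t, ∑ u, r s t u * Real.log (r s t u) + ∑ u, C u * Real.log (C u) := by
  classical
  have hC0 : ∀ u, 0 ≤ C u := fun u => by
    rw [hC]; exact Finset.sum_nonneg fun s _ => Finset.sum_nonneg fun t _ => hr s t u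
  have hrA : ∀ s t u, r s t u ≤ A s u := fun s t u => by
    rw [hA]; exact Finset.single_le_sum (fun t _ => hr s t u) (Finset.mem_univ t)
  have hrB : ∀ s t u, r s t u ≤ B t u := fun s t u => by
    rw [hB]; exact Finset.single_le_sum (fun s _ => hr s t u) (Finset.mem_univ s)
  have hAC : ∀ s u, A s u ≤ C u := fun s u => by
    rw [hA, hC]
    exact Finset.single_le_sum (f := fun s' => ∑ t, r s' t u)
      (fun s' _ => Finset.sum_nonneg fun t _ => hr s' t u) (Finset.mem_univ s)
  have hrC : ∀ s t u, r s t u ≤ C u := fun s t u => le_trans (hrA s t u) (hAC s u)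
  have hCA : ∀ u, ∑ s, A s u = C u := fun u => by
    rw [hC]; exact Finset.sum_congr rfl fun s _ => hA s u
  have hCB : ∀ u, ∑ t, B t u = C u := fun u => by
    rw [hC, Finset.sum_comm]; exact Finset.sum_congr rfl fun t _ => hB t u
  have eA : ∑ s, ∑ u, A s u * Real.log (A s u)
      = ∑ s, ∑ t, ∑ u, r s t u * Real.log (A s u) := by
    refine Finset.sum_congr rfl fun s _ => ?_
    rw [show ∑ u, A s u * Real.log (A s u) = ∑ u, ∑ t, r s t u * Real.log (A s u) from
      Finset.sum_congr rfl fun u _ => by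
        calc A s u * Real.log (A s u)
            = (∑ t, r s t u) * Real.log (A s u) := by rw [← hA]
          _ = ∑ t, r s t u * Real.log (A s u) := Finset.sum_mul _ _ _]
    exact Finset.sum_comm
  have eB : ∑ t, ∑ u, B t u * Real.log (B t u)
      = ∑ s, ∑ t, ∑ u, r s t u * Real.log (B t u) := by
    calc ∑ t, ∑ u, B t u * Real.log (B t u)
        = ∑ t, ∑ u, ∑ s, r s t u * Real.log (B t u) := by
          refine Finset.sum_congr rfl fun t _ => Finset.sum_congr rfl fun u _ => ?_
          calc B t u * Real.log (B t u)
              = (∑ s, r s t u) * Real.log (B t u) := by rw [← hB]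
            _ = ∑ s, r s t u * Real.log (B t u) := Finset.sum_mul _ _ _
      _ = ∑ t, ∑ s, ∑ u, r s t u * Real.log (B t u) :=
          Finset.sum_congr rfl fun t _ => Finset.sum_comm
      _ = ∑ s, ∑ t, ∑ u, r s t u * Real.log (B t u) := Finset.sum_comm
  have eC : ∑ u, C u * Real.log (C u)
      = ∑ s, ∑ t, ∑ u, r s t u * Real.log (C u) := by
    calc ∑ u, C u * Real.log (C u)
        = ∑ u, ∑ s, ∑ t, r s t u * Real.log (C u) := by
          refine Finset.sum_congr rfl fun u _ => ?_
          calc C u * Real.log (C u)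
              = (∑ s, ∑ t, r s t u) * Real.log (C u) := by rw [← hC]
            _ = ∑ s, (∑ t, r s t u) * Real.log (C u) := Finset.sum_mul _ _ _
            _ = ∑ s, ∑ t, r s t u * Real.log (C u) :=
                Finset.sum_congr rfl fun s _ => Finset.sum_mul _ _ _
      _ = ∑ s, ∑ u, ∑ t, r s t u * Real.log (C u) := Finset.sum_comm
      _ = ∑ s, ∑ t, ∑ u, r s t u * Real.log (C u) :=
          Finset.sum_congr rfl fun s _ => Finset.sum_comm
  have step1 : ∑ s, ∑ t, ∑ u, (r s t u * Real.log (A s u) + r s t u * Real.log (B t u)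
        - r s t u * Real.log (r s t u) - r s t u * Real.log (C u))
      ≤ ∑ s, ∑ t, ∑ u, ((if 0 < C u then A s u * B t u / C u else 0) - r s t u) :=
    Finset.sum_le_sum fun s _ => Finset.sum_le_sum fun t _ => Finset.sum_le_sum fun u _ =>
      ptwise (hr s t u) (hrA s t u) (hrB s t u) (hrC s t u)
  have hsum_if : ∑ s, ∑ t, ∑ u, (if 0 < C u then A s u * B t u / C u else 0) = 1 := by
    have swap1 : ∑ s, ∑ t, ∑ u, (if 0 < C u then A s u * B t u / C u else 0)
        = ∑ u, ∑ s, ∑ t, (if 0 < C u then A s u * B t u / C u else 0) := by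
      rw [show (∑ s, ∑ t, ∑ u, (if 0 < C u then A s u * B t u / C u else 0))
          = ∑ s, ∑ u, ∑ t, (if 0 < C u then A s u * B t u / C u else 0) from
        Finset.sum_congr rfl fun s _ => Finset.sum_comm]
      exact Finset.sum_comm
    rw [swap1]
    have inner : ∀ u, ∑ s, ∑ t, (if 0 < C u then A s u * B t u / C u else 0) = C u := by
      intro u
      by_cases h : 0 < C u
      · simp only [if_pos h]
        have : ∑ s, ∑ t, A s u * B t u / C u = (∑ s, A s u) * (∑ t, B t u) / C u := by
          rw [Finset.sum_mul_sum, Finset.sum_div]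
          refine Finset.sum_congr rfl fun s _ => ?_
          rw [Finset.sum_div]
        rw [this, hCA, hCB]
        field_simp
      · simp only [if_neg h]
        simp only [Finset.sum_const_zero]
        have : C u = 0 := le_antisymm (not_lt.1 h) (hC0 u)
        rw [this]
    rw [Finset.sum_congr rfl fun u _ => inner u]
    rw [show ∑ u, C u = ∑ u, ∑ s, ∑ t, r s t u from Finset.sum_congr rfl fun u _ => hC u]
    rw [show (∑ u, ∑ s, ∑ t, r s t u) = ∑ s, ∑ u, ∑ t, r s t u from Finset.sum_comm]
    rw [show (∑ s, ∑ u, ∑ t, r s t u) = ∑ s, ∑ t, ∑ u, r s t u from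
      Finset.sum_congr rfl fun s _ => Finset.sum_comm]
    exact hrsum
  have step2 : ∑ s, ∑ t, ∑ u, ((if 0 < C u then A s u * B t u / C u else 0) - r s t u) = 0 := by
    simp only [Finset.sum_sub_distrib]
    rw [hsum_if, hrsum]
    ring
  rw [eA, eB, eC]
  simp only [Finset.sum_add_distrib, Finset.sum_sub_distrib] at step1
  linarith

lemma cmi_nonneg (p : Ω → ℝ) (hp : ∀ ω, 0 ≤ p ω) (hp1 : ∑ ω, p ω = 1)
    (X : Ω → S) (Y : Ω → T) (Z : Ω → U) : 0 ≤ cmi p X Y Z := by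
  classical
  have hKey :
      ∑ s, ∑ u, prob p (fun ω => (X ω, Z ω) = (s, u))
          * Real.log (prob p (fun ω => (X ω, Z ω) = (s, u)))
        + ∑ t, ∑ u, prob p (fun ω => (Y ω, Z ω) = (t, u))
          * Real.log (prob p (fun ω => (Y ω, Z ω) = (t, u)))
      ≤ ∑ s, ∑ t, ∑ u, prob p (fun ω => (X ω, Y ω, Z ω) = (s, t, u))
          * Real.log (prob p (fun ω => (X ω, Y ω, Z ω) = (s, t, u)))
        + ∑ u, prob p (fun ω => Z ω = u) * Real.log (prob p (fun ω => Z ω = u)) := by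
    refine key_ineq (fun s t u => prob p (fun ω => (X ω, Y ω, Z ω) = (s, t, u)))
      (fun s t u => prob_nonneg p hp _) ?_
      (fun s u => prob p (fun ω => (X ω, Z ω) = (s, u))) (fun s u => prob_middle p X Y Z s u)
      (fun t u => prob p (fun ω => (Y ω, Z ω) = (t, u)))
      (fun t u => prob_snd p X (fun ω => (Y ω, Z ω)) (t, u))
      (fun u => prob p (fun ω => Z ω = u))
      (fun u => (prob_snd p X Z u).trans
        (Finset.sum_congr rfl fun s _ => prob_middle p X Y Z s u))
    have h := sum_prob p hp1 (fun ω => (X ω, Y ω, Z ω))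
    rw [Fintype.sum_prod_type] at h
    simpa [Fintype.sum_prod_type] using h
  have e3 : ent p (fun ω => (X ω, Y ω, Z ω))
      = -∑ s, ∑ t, ∑ u, prob p (fun ω => (X ω, Y ω, Z ω) = (s, t, u))
          * Real.log (prob p (fun ω => (X ω, Y ω, Z ω) = (s, t, u))) := by
    simp only [ent, Fintype.sum_prod_type]
  have e2a : ent p (fun ω => (X ω, Z ω))
      = -∑ s, ∑ u, prob p (fun ω => (X ω, Z ω) = (s, u))
          * Real.log (prob p (fun ω => (X ω, Z ω) = (s, u))) := by
    simp only [ent, Fintype.sum_prod_type]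
  have e2b : ent p (fun ω => (Y ω, Z ω))
      = -∑ t, ∑ u, prob p (fun ω => (Y ω, Z ω) = (t, u))
          * Real.log (prob p (fun ω => (Y ω, Z ω) = (t, u))) := by
    simp only [ent, Fintype.sum_prod_type]
  have eZ : ent p Z
      = -∑ u, prob p (fun ω => Z ω = u) * Real.log (prob p (fun ω => Z ω = u)) := rfl
  unfold cmi
  rw [e3, e2a, e2b, eZ]
  linarith

lemma condEnt_nonneg (p : Ω → ℝ) (hp : ∀ ω, 0 ≤ p ω) (hp1 : ∑ ω, p ω = 1)
    (X : Ω → S) (Y : Ω → T) : 0 ≤ condEnt p X Y := by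
  have h := cmi_nonneg p hp hp1 X X Y
  have e : ent p (fun ω => (X ω, X ω, Y ω)) = ent p (fun ω => (X ω, Y ω)) :=
    ent_comp_inj p (fun ω => (X ω, Y ω)) (fun q => (q.1, q.1, q.2))
      (fun a b h => by
        simp only [Prod.mk.injEq] at h
        simp only [Prod.ext_iff]
        tauto)
  unfold cmi at h
  rw [e] at h
  unfold condEnt
  linarith

end Lemmas

theorem stmt5 {Ω S T U V R : Type} [Fintype Ω] [Fintype S] [Fintype T] [Fintype U]
    [Fintype V] [Fintype R]
    (p : Ω → ℝ) (hp : ∀ ω, 0 ≤ p ω) (hp1 : ∑ ω, p ω = 1)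
    (X : Ω → S) (Y : Ω → T) (A : Ω → U) (B : Ω → V) (W : Ω → R)
    (δ : ℝ) (hδ : 0 ≤ δ)
    (hWXY : condEnt p W (fun ω => (X ω, Y ω)) = 0)
    (hXYA : cmi p (fun ω => (X ω, Y ω)) A W ≤ δ)
    (hWX : max (condEnt p W X) (condEnt p W Y) ≤ δ) :
    mi p X Y ≤ cmi p X Y A + cmi p X Y B + mi p A B + 6 * δ := by
  have c1 : ent p (fun ω => (W ω, X ω, Y ω)) = ent p (fun ω => (X ω, Y ω, W ω)) :=
    ent_comp_inj p (fun ω => (X ω, Y ω, W ω)) (fun q => (q.2.2, q.1, q.2.1))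
      (fun a b h => by
        simp only [Prod.mk.injEq] at h
        simp only [Prod.ext_iff]
        tauto)
  have c2 : ent p (fun ω => ((X ω, Y ω), W ω)) = ent p (fun ω => (X ω, Y ω, W ω)) :=
    ent_comp_inj p (fun ω => (X ω, Y ω, W ω)) (fun q => ((q.1, q.2.1), q.2.2))
      (fun a b h => by
        simp only [Prod.mk.injEq] at h
        simp only [Prod.ext_iff]
        tauto)
  have c3 : ent p (fun ω => ((X ω, Y ω), A ω, W ω)) = ent p (fun ω => (X ω, Y ω, A ω, W ω)) :=
    ent_comp_inj p (fun ω => (X ω, Y ω, A ω, W ω)) (fun q => ((q.1, q.2.1), q.2.2.1, q.2.2.2))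
      (fun a b h => by
        simp only [Prod.mk.injEq] at h
        simp only [Prod.ext_iff]
        tauto)
  have c4 : ent p (fun ω => (W ω, X ω)) = ent p (fun ω => (X ω, W ω)) :=
    ent_comp_inj p (fun ω => (X ω, W ω)) (fun q => (q.2, q.1))
      (fun a b h => by
        simp only [Prod.mk.injEq] at h
        simp only [Prod.ext_iff]
        tauto)
  have c5 : ent p (fun ω => (W ω, Y ω)) = ent p (fun ω => (Y ω, W ω)) :=
    ent_comp_inj p (fun ω => (Y ω, W ω)) (fun q => (q.2, q.1))
      (fun a b h => by
        simp only [Prod.mk.injEq] at h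
        simp only [Prod.ext_iff]
        tauto)
  have c6 : ent p (fun ω => (W ω, X ω, Y ω, A ω, B ω)) = ent p (fun ω => (X ω, Y ω, A ω, B ω, W ω)) :=
    ent_comp_inj p (fun ω => (X ω, Y ω, A ω, B ω, W ω)) (fun q => (q.2.2.2.2, q.1, q.2.1, q.2.2.1, q.2.2.2.1))
      (fun a b h => by
        simp only [Prod.mk.injEq] at h
        simp only [Prod.ext_iff]
        tauto)
  have c7 : ent p (fun ω => (A ω, Y ω, W ω)) = ent p (fun ω => (Y ω, A ω, W ω)) :=
    ent_comp_inj p (fun ω => (Y ω, A ω, W ω)) (fun q => (q.2.1, q.1, q.2.2))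
      (fun a b h => by
        simp only [Prod.mk.injEq] at h
        simp only [Prod.ext_iff]
        tauto)
  have c8 : ent p (fun ω => (X ω, A ω, Y ω, W ω)) = ent p (fun ω => (X ω, Y ω, A ω, W ω)) :=
    ent_comp_inj p (fun ω => (X ω, Y ω, A ω, W ω)) (fun q => (q.1, q.2.2.1, q.2.1, q.2.2.2))
      (fun a b h => by
        simp only [Prod.mk.injEq] at h
        simp only [Prod.ext_iff]
        tauto)
  have c9 : ent p (fun ω => (W ω, A ω, B ω)) = ent p (fun ω => (A ω, B ω, W ω)) :=
    ent_comp_inj p (fun ω => (A ω, B ω, W ω)) (fun q => (q.2.2, q.1, q.2.1))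
      (fun a b h => by
        simp only [Prod.mk.injEq] at h
        simp only [Prod.ext_iff]
        tauto)
  have c10 : ent p (fun ω => (X ω, W ω, A ω, B ω)) = ent p (fun ω => (X ω, A ω, B ω, W ω)) :=
    ent_comp_inj p (fun ω => (X ω, A ω, B ω, W ω)) (fun q => (q.1, q.2.2.2, q.2.1, q.2.2.1))
      (fun a b h => by
        simp only [Prod.mk.injEq] at h
        simp only [Prod.ext_iff]
        tauto)
  have c11 : ent p (fun ω => (Y ω, X ω, W ω)) = ent p (fun ω => (X ω, Y ω, W ω)) :=
    ent_comp_inj p (fun ω => (X ω, Y ω, W ω)) (fun q => (q.2.1, q.1, q.2.2))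
      (fun a b h => by
        simp only [Prod.mk.injEq] at h
        simp only [Prod.ext_iff]
        tauto)
  have c12 : ent p (fun ω => (A ω, X ω, W ω)) = ent p (fun ω => (X ω, A ω, W ω)) :=
    ent_comp_inj p (fun ω => (X ω, A ω, W ω)) (fun q => (q.2.1, q.1, q.2.2))
      (fun a b h => by
        simp only [Prod.mk.injEq] at h
        simp only [Prod.ext_iff]
        tauto)
  have c13 : ent p (fun ω => (Y ω, A ω, X ω, W ω)) = ent p (fun ω => (X ω, Y ω, A ω, W ω)) :=
    ent_comp_inj p (fun ω => (X ω, Y ω, A ω, W ω)) (fun q => (q.2.1, q.2.2.1, q.1, q.2.2.2))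
      (fun a b h => by
        simp only [Prod.mk.injEq] at h
        simp only [Prod.ext_iff]
        tauto)
  have c14 : ent p (fun ω => (Y ω, X ω, A ω, B ω)) = ent p (fun ω => (X ω, Y ω, A ω, B ω)) :=
    ent_comp_inj p (fun ω => (X ω, Y ω, A ω, B ω)) (fun q => (q.2.1, q.1, q.2.2.1, q.2.2.2))
      (fun a b h => by
        simp only [Prod.mk.injEq] at h
        simp only [Prod.ext_iff]
        tauto)
  have c15 : ent p (fun ω => (W ω, X ω, A ω, B ω)) = ent p (fun ω => (X ω, A ω, B ω, W ω)) :=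
    ent_comp_inj p (fun ω => (X ω, A ω, B ω, W ω)) (fun q => (q.2.2.2, q.1, q.2.1, q.2.2.1))
      (fun a b h => by
        simp only [Prod.mk.injEq] at h
        simp only [Prod.ext_iff]
        tauto)
  have c16 : ent p (fun ω => (Y ω, W ω, X ω, A ω, B ω)) = ent p (fun ω => (X ω, Y ω, A ω, B ω, W ω)) :=
    ent_comp_inj p (fun ω => (X ω, Y ω, A ω, B ω, W ω)) (fun q => (q.2.1, q.2.2.2.2, q.1, q.2.2.1, q.2.2.2.1))
      (fun a b h => by
        simp only [Prod.mk.injEq] at h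
        simp only [Prod.ext_iff]
        tauto)
  have c17 : ent p (fun ω => (A ω, X ω)) = ent p (fun ω => (X ω, A ω)) :=
    ent_comp_inj p (fun ω => (X ω, A ω)) (fun q => (q.2, q.1))
      (fun a b h => by
        simp only [Prod.mk.injEq] at h
        simp only [Prod.ext_iff]
        tauto)
  have c19 : ent p (fun ω => (A ω, W ω, X ω)) = ent p (fun ω => (X ω, A ω, W ω)) :=
    ent_comp_inj p (fun ω => (X ω, A ω, W ω)) (fun q => (q.2.1, q.2.2, q.1))
      (fun a b h => by
        simp only [Prod.mk.injEq] at h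
        simp only [Prod.ext_iff]
        tauto)
  have c20 : ent p (fun ω => (A ω, Y ω)) = ent p (fun ω => (Y ω, A ω)) :=
    ent_comp_inj p (fun ω => (Y ω, A ω)) (fun q => (q.2, q.1))
      (fun a b h => by
        simp only [Prod.mk.injEq] at h
        simp only [Prod.ext_iff]
        tauto)
  have c22 : ent p (fun ω => (A ω, W ω, Y ω)) = ent p (fun ω => (Y ω, A ω, W ω)) :=
    ent_comp_inj p (fun ω => (Y ω, A ω, W ω)) (fun q => (q.2.1, q.2.2, q.1))
      (fun a b h => by
        simp only [Prod.mk.injEq] at h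
        simp only [Prod.ext_iff]
        tauto)
  have c23 : ent p (fun ω => (A ω, X ω, Y ω, B ω)) = ent p (fun ω => (X ω, Y ω, A ω, B ω)) :=
    ent_comp_inj p (fun ω => (X ω, Y ω, A ω, B ω)) (fun q => (q.2.2.1, q.1, q.2.1, q.2.2.2))
      (fun a b h => by
        simp only [Prod.mk.injEq] at h
        simp only [Prod.ext_iff]
        tauto)
  have c24 : ent p (fun ω => (W ω, X ω, Y ω, B ω)) = ent p (fun ω => (X ω, Y ω, B ω, W ω)) :=
    ent_comp_inj p (fun ω => (X ω, Y ω, B ω, W ω)) (fun q => (q.2.2.2, q.1, q.2.1, q.2.2.1))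
      (fun a b h => by
        simp only [Prod.mk.injEq] at h
        simp only [Prod.ext_iff]
        tauto)
  have c25 : ent p (fun ω => (A ω, W ω, X ω, Y ω, B ω)) = ent p (fun ω => (X ω, Y ω, A ω, B ω, W ω)) :=
    ent_comp_inj p (fun ω => (X ω, Y ω, A ω, B ω, W ω)) (fun q => (q.2.2.1, q.2.2.2.2, q.1, q.2.1, q.2.2.2.1))
      (fun a b h => by
        simp only [Prod.mk.injEq] at h
        simp only [Prod.ext_iff]
        tauto)
  have c26 : ent p (fun ω => (B ω, X ω)) = ent p (fun ω => (X ω, B ω)) :=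
    ent_comp_inj p (fun ω => (X ω, B ω)) (fun q => (q.2, q.1))
      (fun a b h => by
        simp only [Prod.mk.injEq] at h
        simp only [Prod.ext_iff]
        tauto)
  have c28 : ent p (fun ω => (B ω, W ω, X ω)) = ent p (fun ω => (X ω, B ω, W ω)) :=
    ent_comp_inj p (fun ω => (X ω, B ω, W ω)) (fun q => (q.2.1, q.2.2, q.1))
      (fun a b h => by
        simp only [Prod.mk.injEq] at h
        simp only [Prod.ext_iff]
        tauto)
  have c29 : ent p (fun ω => (B ω, Y ω)) = ent p (fun ω => (Y ω, B ω)) :=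
    ent_comp_inj p (fun ω => (Y ω, B ω)) (fun q => (q.2, q.1))
      (fun a b h => by
        simp only [Prod.mk.injEq] at h
        simp only [Prod.ext_iff]
        tauto)
  have c30 : ent p (fun ω => (B ω, W ω, Y ω)) = ent p (fun ω => (Y ω, B ω, W ω)) :=
    ent_comp_inj p (fun ω => (Y ω, B ω, W ω)) (fun q => (q.2.1, q.2.2, q.1))
      (fun a b h => by
        simp only [Prod.mk.injEq] at h
        simp only [Prod.ext_iff]
        tauto)
  have c31 : ent p (fun ω => (B ω, X ω, Y ω, A ω)) = ent p (fun ω => (X ω, Y ω, A ω, B ω)) :=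
    ent_comp_inj p (fun ω => (X ω, Y ω, A ω, B ω)) (fun q => (q.2.2.2, q.1, q.2.1, q.2.2.1))
      (fun a b h => by
        simp only [Prod.mk.injEq] at h
        simp only [Prod.ext_iff]
        tauto)
  have c32 : ent p (fun ω => (W ω, X ω, Y ω, A ω)) = ent p (fun ω => (X ω, Y ω, A ω, W ω)) :=
    ent_comp_inj p (fun ω => (X ω, Y ω, A ω, W ω)) (fun q => (q.2.2.2, q.1, q.2.1, q.2.2.1))
      (fun a b h => by
        simp only [Prod.mk.injEq] at h
        simp only [Prod.ext_iff]
        tauto)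
  have c33 : ent p (fun ω => (B ω, W ω, X ω, Y ω, A ω)) = ent p (fun ω => (X ω, Y ω, A ω, B ω, W ω)) :=
    ent_comp_inj p (fun ω => (X ω, Y ω, A ω, B ω, W ω)) (fun q => (q.2.2.2.1, q.2.2.2.2, q.1, q.2.1, q.2.2.1))
      (fun a b h => by
        simp only [Prod.mk.injEq] at h
        simp only [Prod.ext_iff]
        tauto)
  have N1 := condEnt_nonneg p hp hp1 W (fun ω => (X ω, Y ω, A ω, B ω))
  have N2 := cmi_nonneg p hp hp1 X Y (fun ω => (B ω, W ω))
  have N3 := cmi_nonneg p hp hp1 X A (fun ω => (Y ω, W ω))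
  have N4 := cmi_nonneg p hp hp1 X W (fun ω => (A ω, B ω))
  have N5 := cmi_nonneg p hp hp1 Y A (fun ω => (X ω, W ω))
  have N6 := cmi_nonneg p hp hp1 Y W (fun ω => (X ω, A ω, B ω))
  have N7 := cmi_nonneg p hp hp1 A B W
  have N8 := cmi_nonneg p hp hp1 A W X
  have N9 := cmi_nonneg p hp hp1 A W Y
  have N10 := cmi_nonneg p hp hp1 A W (fun ω => (X ω, Y ω, B ω))
  have N11 := cmi_nonneg p hp hp1 B W X
  have N12 := cmi_nonneg p hp hp1 B W Y
  have N13 := cmi_nonneg p hp hp1 B W (fun ω => (X ω, Y ω, A ω))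
  have hWX1 : condEnt p W X ≤ δ := le_trans (le_max_left _ _) hWX
  have hWX2 : condEnt p W Y ≤ δ := le_trans (le_max_right _ _) hWX
  simp only [mi, cmi, condEnt] at N1 N2 N3 N4 N5 N6 N7 N8 N9 N10 N11 N12 N13 hWXY hXYA hWX1 hWX2 ⊢
  linarith [c1, c2, c3, c4, c5, c6, c7, c8, c9, c10, c11, c12, c13, c14, c15, c16, c17, c19, c20, c22, c23, c24, c25, c26, c28, c29, c30, c31, c32, c33, N1, N2, N3, N4, N5, N6, N7, N8, N9, N10, N11, N12, N13, hWXY, hXYA, hWX1, hWX2, hδ]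


end PaperIngleton
end

section
/- Symmetrization: Let (X₀,…,X_{n−1}, A, B) be finitely-valued random variables where A takes values in a finite set 𝒜 and B in a finite set ℬ, with 𝒜 and ℬ disjoint. Then there exist jointly distributed (X₀,…,X_{n−1}, Ā, B̄), with Ā, B̄ valued in 𝒜 ∪ ℬ, whose joint law is invariant under swapping Ā and B̄, and such that for every subset J of indices: H(X_J, Ā) = H(X_J, B̄) = ½(H(X_J, A) + H(X_J, B)) + log 2 and H(X_J, Ā, B̄) = H(X_J, A, B) + log 2. -/
open scoped BigOperators

namespace PaperIngleton

open Classical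

lemma prob_congr {Ω : Type*} [Fintype Ω] (p : Ω → ℝ) {E F : Ω → Prop}
    (h : ∀ ω, E ω ↔ F ω) : prob p E = prob p F := by
  unfold prob
  exact Finset.sum_congr rfl (fun ω _ => by simp [h ω])

lemma prob_sum_one {Ω S : Type*} [Fintype Ω] [Fintype S] (p : Ω → ℝ)
    (hp1 : ∑ ω, p ω = 1) (Z : Ω → S) :
    ∑ s, prob p (fun ω => Z ω = s) = 1 := by
  unfold prob
  rw [Finset.sum_comm]
  simpa using hp1

lemma xlogx_half (r : ℝ) : (r/2) * Real.log (r/2) = (r * Real.log r)/2 - (r/2) * Real.log 2 := by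
  rcases eq_or_ne r 0 with h | h
  · simp [h]
  · rw [Real.log_div h two_ne_zero]; ring

lemma ent_comp_inj_s10 {Ω T V : Type*} [Fintype Ω] [Fintype T] [Fintype V]
    (p : Ω → ℝ) (W : Ω → T) (ι : T → V) (hι : Function.Injective ι) :
    ent p (fun ω => ι (W ω)) = ent p W := by
  unfold ent
  congr 1
  have key : ∀ t, prob p (fun ω => ι (W ω) = ι t) = prob p (fun ω => W ω = t) :=
    fun t => prob_congr p (fun ω => ⟨fun h => hι h, fun h => by rw [h]⟩)
  rw [← Finset.sum_subset (Finset.subset_univ (Finset.univ.image ι))]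
  · rw [Finset.sum_image (fun x _ y _ h => hι h)]
    exact Finset.sum_congr rfl (fun t _ => by rw [key t])
  · intro v _ hv
    have hz : prob p (fun ω => ι (W ω) = v) = 0 := by
      unfold prob
      apply Finset.sum_eq_zero
      intro ω _
      have : ¬ (ι (W ω) = v) := fun h => hv (Finset.mem_image.2 ⟨W ω, Finset.mem_univ _, h⟩)
      simp [this]
    simp [hz]

lemma prob_prod_bool {Ω : Type*} [Fintype Ω] (p : Ω → ℝ) (E : Ω × Bool → Prop) :
    prob (fun ωc : Ω × Bool => p ωc.1 / 2) E
      = (prob p (fun ω => E (ω, true)) + prob p (fun ω => E (ω, false)))/2 := by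
  unfold prob
  rw [Fintype.sum_prod_type]
  have h : ∀ ω : Ω, (∑ c : Bool, if E (ω, c) then p ω / 2 else 0)
      = ((if E (ω, true) then p ω else 0) + (if E (ω, false) then p ω else 0)) / 2 := by
    intro ω
    simp only [Fintype.sum_bool]
    split_ifs <;> ring
  simp only [h]
  rw [← Finset.sum_div, Finset.sum_add_distrib]

lemma ent_double {Ω V T₁ T₂ : Type*} [Fintype Ω] [Fintype V] [Fintype T₁] [Fintype T₂]
    (p : Ω → ℝ) (hp1 : ∑ ω, p ω = 1)
    (W₁ : Ω → T₁) (W₂ : Ω → T₂) (ι₁ : T₁ → V) (ι₂ : T₂ → V)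
    (h₁ : Function.Injective ι₁) (h₂ : Function.Injective ι₂)
    (hd : ∀ t₁ t₂, ι₁ t₁ ≠ ι₂ t₂)
    (Z : Ω × Bool → V)
    (hZt : ∀ ω, Z (ω, true) = ι₁ (W₁ ω)) (hZf : ∀ ω, Z (ω, false) = ι₂ (W₂ ω)) :
    ent (fun ωc : Ω × Bool => p ωc.1 / 2) Z = (ent p W₁ + ent p W₂)/2 + Real.log 2 := by
  set q₁ : V → ℝ := fun v => prob p (fun ω => ι₁ (W₁ ω) = v) with hq₁
  set q₂ : V → ℝ := fun v => prob p (fun ω => ι₂ (W₂ ω) = v) with hq₂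
  have hq : ∀ v : V, prob (fun ωc : Ω × Bool => p ωc.1 / 2) (fun ωc => Z ωc = v)
      = (q₁ v + q₂ v) / 2 := by
    intro v
    rw [prob_prod_bool]
    have e1 : prob p (fun ω => Z (ω, true) = v) = q₁ v :=
      prob_congr p (fun ω => by rw [hZt ω])
    have e2 : prob p (fun ω => Z (ω, false) = v) = q₂ v :=
      prob_congr p (fun ω => by rw [hZf ω])
    rw [e1, e2]
  have hdis : ∀ v : V, q₁ v = 0 ∨ q₂ v = 0 := by
    intro v
    by_cases h : ∃ t, ι₁ t = v
    · right
      obtain ⟨t, ht⟩ := h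
      apply Finset.sum_eq_zero
      intro ω _
      have hne : ¬ (ι₂ (W₂ ω) = v) := fun hv => hd t (W₂ ω) (ht.trans hv.symm)
      simp [hne]
    · left
      apply Finset.sum_eq_zero
      intro ω _
      have hne : ¬ (ι₁ (W₁ ω) = v) := fun hv => h ⟨W₁ ω, hv⟩
      simp [hne]
  have key : ∀ v : V,
      prob (fun ωc : Ω × Bool => p ωc.1 / 2) (fun ωc => Z ωc = v)
        * Real.log (prob (fun ωc : Ω × Bool => p ωc.1 / 2) (fun ωc => Z ωc = v))
      = (q₁ v * Real.log (q₁ v) + q₂ v * Real.log (q₂ v))/2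
          - ((q₁ v + q₂ v)/2) * Real.log 2 := by
    intro v
    rw [hq v]
    rcases hdis v with h | h <;> rw [h]
    · simp only [zero_add, Real.log_zero, mul_zero, zero_mul]
      exact xlogx_half (q₂ v)
    · simp only [add_zero, Real.log_zero, mul_zero, zero_mul]
      exact xlogx_half (q₁ v)
  have hs1 : ∑ v : V, q₁ v = 1 := prob_sum_one p hp1 (fun ω => ι₁ (W₁ ω))
  have hs2 : ∑ v : V, q₂ v = 1 := prob_sum_one p hp1 (fun ω => ι₂ (W₂ ω))
  have hE1 : ∑ v : V, q₁ v * Real.log (q₁ v) = - ent p W₁ := by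
    rw [← ent_comp_inj_s10 p W₁ ι₁ h₁]
    unfold ent
    rw [neg_neg]
  have hE2 : ∑ v : V, q₂ v * Real.log (q₂ v) = - ent p W₂ := by
    rw [← ent_comp_inj_s10 p W₂ ι₂ h₂]
    unfold ent
    rw [neg_neg]
  conv_lhs => unfold ent
  rw [Finset.sum_congr rfl (fun v _ => key v)]
  rw [Finset.sum_sub_distrib]
  rw [← Finset.sum_div, Finset.sum_add_distrib, hE1, hE2]
  have : ∑ v : V, ((q₁ v + q₂ v)/2) * Real.log 2
      = ((∑ v : V, q₁ v) + (∑ v : V, q₂ v))/2 * Real.log 2 := by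
    rw [← Finset.sum_mul, ← Finset.sum_div, Finset.sum_add_distrib]
  rw [this, hs1, hs2]
  ring




/-- Symmetrization lemma. Disjointness of the alphabets `𝒜` and `ℬ` is modeled
by taking `Ā, B̄` valued in the sum type `α ⊕ β`. -/
theorem stmt10 {Ω : Type} [Fintype Ω] {n : ℕ} {S : Fin n → Type} [∀ i, Fintype (S i)]
    {α β : Type} [Fintype α] [Fintype β]
    (p : Ω → ℝ) (hp : ∀ ω, 0 ≤ p ω) (hp1 : ∑ ω, p ω = 1)
    (X : (i : Fin n) → Ω → S i) (A : Ω → α) (B : Ω → β) :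
    ∃ (Ω' : Type) (_ : Fintype Ω') (p' : Ω' → ℝ)
      (X' : (i : Fin n) → Ω' → S i) (Abar Bbar : Ω' → α ⊕ β),
      (∀ ω, 0 ≤ p' ω) ∧ (∑ ω, p' ω = 1) ∧
      -- the joint law is invariant under swapping Ā and B̄
      (∀ (v : (i : Fin n) → S i) (a b : α ⊕ β),
        prob p' (fun ω => (∀ i, X' i ω = v i) ∧ Abar ω = a ∧ Bbar ω = b)
        = prob p' (fun ω => (∀ i, X' i ω = v i) ∧ Abar ω = b ∧ Bbar ω = a)) ∧
      -- entropy identities for every subcollection X_J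
      (∀ J : Finset (Fin n),
        ent p' (fun ω => ((fun i : J => X' i.1 ω), Abar ω))
          = ent p' (fun ω => ((fun i : J => X' i.1 ω), Bbar ω)) ∧
        ent p' (fun ω => ((fun i : J => X' i.1 ω), Abar ω))
          = (ent p (fun ω => ((fun i : J => X i.1 ω), A ω))
             + ent p (fun ω => ((fun i : J => X i.1 ω), B ω))) / 2 + Real.log 2 ∧
        ent p' (fun ω => ((fun i : J => X' i.1 ω), Abar ω, Bbar ω))
          = ent p (fun ω => ((fun i : J => X i.1 ω), A ω, B ω)) + Real.log 2) := by
  classical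
  refine ⟨Ω × Bool, inferInstance, fun ωc => p ωc.1 / 2,
    fun i ωc => X i ωc.1,
    fun ωc => if ωc.2 then Sum.inl (A ωc.1) else Sum.inr (B ωc.1),
    fun ωc => if ωc.2 then Sum.inr (B ωc.1) else Sum.inl (A ωc.1),
    fun ωc => by have := hp ωc.1; linarith, ?_, ?_, ?_⟩
  · rw [Fintype.sum_prod_type]
    have h : ∀ ω : Ω, (∑ _c : Bool, p ω / 2) = p ω := by
      intro ω; simp only [Fintype.sum_bool]; ring
    rw [Finset.sum_congr rfl (fun ω _ => h ω), hp1]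
  · intro v a b
    rw [prob_prod_bool, prob_prod_bool]
    show (prob p (fun ω => (∀ i, X i ω = v i) ∧ Sum.inl (A ω) = a ∧ Sum.inr (B ω) = b)
        + prob p (fun ω => (∀ i, X i ω = v i) ∧ Sum.inr (B ω) = a ∧ Sum.inl (A ω) = b)) / 2
      = (prob p (fun ω => (∀ i, X i ω = v i) ∧ Sum.inl (A ω) = b ∧ Sum.inr (B ω) = a)
        + prob p (fun ω => (∀ i, X i ω = v i) ∧ Sum.inr (B ω) = b ∧ Sum.inl (A ω) = a)) / 2
    have h1 : prob p (fun ω => (∀ i, X i ω = v i) ∧ Sum.inl (A ω) = a ∧ Sum.inr (B ω) = b)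
        = prob p (fun ω => (∀ i, X i ω = v i) ∧ Sum.inr (B ω) = b ∧ Sum.inl (A ω) = a) :=
      prob_congr p (fun ω => ⟨fun ⟨x, y, z⟩ => ⟨x, z, y⟩, fun ⟨x, y, z⟩ => ⟨x, z, y⟩⟩)
    have h2 : prob p (fun ω => (∀ i, X i ω = v i) ∧ Sum.inr (B ω) = a ∧ Sum.inl (A ω) = b)
        = prob p (fun ω => (∀ i, X i ω = v i) ∧ Sum.inl (A ω) = b ∧ Sum.inr (B ω) = a) :=
      prob_congr p (fun ω => ⟨fun ⟨x, y, z⟩ => ⟨x, z, y⟩, fun ⟨x, y, z⟩ => ⟨x, z, y⟩⟩)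
    rw [h1, h2]
    ring
  · intro J
    have inj1 : Function.Injective
        (fun t : ((i : J) → S i.1) × α => ((t.1, Sum.inl t.2) : ((i : J) → S i.1) × (α ⊕ β))) := by
      intro t t' h; simp only [Prod.ext_iff, Sum.inl.injEq] at h ⊢; exact h
    have inj2 : Function.Injective
        (fun t : ((i : J) → S i.1) × β => ((t.1, Sum.inr t.2) : ((i : J) → S i.1) × (α ⊕ β))) := by
      intro t t' h; simp only [Prod.ext_iff, Sum.inr.injEq] at h ⊢; exact h
    have hd12 : ∀ (t₁ : ((i : J) → S i.1) × α) (t₂ : ((i : J) → S i.1) × β),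
        ((t₁.1, Sum.inl t₁.2) : ((i : J) → S i.1) × (α ⊕ β)) ≠ (t₂.1, Sum.inr t₂.2) := by
      intro t₁ t₂ h; simp only [Prod.ext_iff] at h; exact Sum.inl_ne_inr h.2
    have hA := ent_double p hp1
        (fun ω => ((fun i : J => X i.1 ω), A ω))
        (fun ω => ((fun i : J => X i.1 ω), B ω))
        (fun t => (t.1, Sum.inl t.2)) (fun t => (t.1, Sum.inr t.2))
        inj1 inj2 hd12
        (fun ωc => ((fun i : J => X i.1 ωc.1),
          if ωc.2 then Sum.inl (A ωc.1) else Sum.inr (B ωc.1)))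
        (fun ω => rfl) (fun ω => rfl)
    have hB := ent_double p hp1
        (fun ω => ((fun i : J => X i.1 ω), B ω))
        (fun ω => ((fun i : J => X i.1 ω), A ω))
        (fun t => (t.1, Sum.inr t.2)) (fun t => (t.1, Sum.inl t.2))
        inj2 inj1 (fun t₁ t₂ h => hd12 t₂ t₁ h.symm)
        (fun ωc => ((fun i : J => X i.1 ωc.1),
          if ωc.2 then Sum.inr (B ωc.1) else Sum.inl (A ωc.1)))
        (fun ω => rfl) (fun ω => rfl)
    have inj3 : Function.Injective
        (fun t : ((i : J) → S i.1) × α × β =>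
          ((t.1, Sum.inl t.2.1, Sum.inr t.2.2) : ((i : J) → S i.1) × (α ⊕ β) × (α ⊕ β))) := by
      intro t t' h
      simp only [Prod.ext_iff, Sum.inl.injEq, Sum.inr.injEq] at h ⊢; exact h
    have inj4 : Function.Injective
        (fun t : ((i : J) → S i.1) × α × β =>
          ((t.1, Sum.inr t.2.2, Sum.inl t.2.1) : ((i : J) → S i.1) × (α ⊕ β) × (α ⊕ β))) := by
      intro t t' h
      simp only [Prod.ext_iff, Sum.inl.injEq, Sum.inr.injEq] at h ⊢
      exact ⟨h.1, h.2.2, h.2.1⟩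
    have hd34 : ∀ (t₁ t₂ : ((i : J) → S i.1) × α × β),
        ((t₁.1, Sum.inl t₁.2.1, Sum.inr t₁.2.2) : ((i : J) → S i.1) × (α ⊕ β) × (α ⊕ β))
          ≠ (t₂.1, Sum.inr t₂.2.2, Sum.inl t₂.2.1) := by
      intro t₁ t₂ h; simp only [Prod.ext_iff] at h; exact Sum.inl_ne_inr h.2.1
    have hC := ent_double p hp1
        (fun ω => ((fun i : J => X i.1 ω), A ω, B ω))
        (fun ω => ((fun i : J => X i.1 ω), A ω, B ω))
        (fun t => (t.1, Sum.inl t.2.1, Sum.inr t.2.2))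
        (fun t => (t.1, Sum.inr t.2.2, Sum.inl t.2.1))
        inj3 inj4 hd34
        (fun ωc => ((fun i : J => X i.1 ωc.1),
          (if ωc.2 then Sum.inl (A ωc.1) else Sum.inr (B ωc.1)),
          (if ωc.2 then Sum.inr (B ωc.1) else Sum.inl (A ωc.1))))
        (fun ω => rfl) (fun ω => rfl)
    exact ⟨hA.trans (by
      rw [add_comm (ent p fun ω => ((fun i : J => X i.1 ω), A ω))
        (ent p fun ω => ((fun i : J => X i.1 ω), B ω))]
      exact hB.symm), hA, hC.trans (by ring)⟩

end PaperIngleton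
end
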